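/- arXiv:1401.0443 — 4 statements merged into one kernel-verified Lean document; each statement's English description precedes it below -/
import Mathlib

section
/- Let P be a set of n points in the plane in general position. There exists a point p ∈ P such that every quadrant of the form {(x,y) : x ≥ x₀, y ≥ y₀} (a fixed-orientation quadrant) containing more than n/2 points of P also contains p. -/
lemma rank_strict {P : Finset (ℝ × ℝ)} (f : ℝ × ℝ → ℝ) {q q' : ℝ × ℝ}
    (hq : q ∈ P) (hlt : f q < f q') :
    (P.filter (fun r => f q' ≤ f r)).card < (P.filter (fun r => f q ≤ f r)).card := by
  apply Finset.card_lt_card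
  constructor
  · intro r hr
    simp only [Finset.mem_filter] at hr ⊢
    exact ⟨hr.1, le_trans hlt.le hr.2⟩
  · intro h
    have := h (Finset.mem_filter.mpr ⟨hq, le_refl _⟩)
    simp only [Finset.mem_filter] at this
    exact absurd this.2 (not_le.mpr hlt)

lemma top_card (P : Finset (ℝ × ℝ)) (n k : ℕ) (hn : P.card = n) (hkn : k ≤ n)
    (f : ℝ × ℝ → ℝ) (hinj : ∀ u ∈ P, ∀ v ∈ P, u ≠ v → f u ≠ f v) :
    k ≤ (P.filter (fun q => (P.filter (fun r => f q ≤ f r)).card ≤ k)).card := by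
  classical
  have hinjOn : Set.InjOn (fun q => (P.filter (fun r => f q ≤ f r)).card) P := by
    intro u hu v hv huv
    by_contra hne
    have hfne : f u ≠ f v := hinj u hu v hv hne
    simp only at huv
    have hu' : u ∈ P := hu
    have hv' : v ∈ P := hv
    rcases hfne.lt_or_gt with h | h
    · exact absurd huv (Nat.ne_of_gt (rank_strict f hu' h))
    · exact absurd huv (Nat.ne_of_gt (rank_strict f hv' h)).symm
  have himg : P.image (fun q => (P.filter (fun r => f q ≤ f r)).card) = Finset.Icc 1 n := by
    apply Finset.eq_of_subset_of_card_le
    · intro m hm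
      simp only [Finset.mem_image] at hm
      obtain ⟨q, hq, rfl⟩ := hm
      simp only [Finset.mem_Icc]
      refine ⟨Finset.card_pos.mpr ⟨q, Finset.mem_filter.mpr ⟨hq, le_refl _⟩⟩, ?_⟩
      calc (P.filter (fun r => f q ≤ f r)).card ≤ P.card := Finset.card_filter_le _ _
        _ = n := hn
    · rw [Nat.card_Icc, Finset.card_image_of_injOn hinjOn, hn]
      omega
  have hXimg : ((P.filter (fun q => (P.filter (fun r => f q ≤ f r)).card ≤ k)).image
      (fun q => (P.filter (fun r => f q ≤ f r)).card)) =
      (P.image (fun q => (P.filter (fun r => f q ≤ f r)).card)).filter (fun m => m ≤ k) := by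
    ext m
    simp only [Finset.mem_image, Finset.mem_filter]
    aesop
  have hcard : ((P.filter (fun q => (P.filter (fun r => f q ≤ f r)).card ≤ k)).image
      (fun q => (P.filter (fun r => f q ≤ f r)).card)).card = k := by
    rw [hXimg, himg]
    have : (Finset.Icc 1 n).filter (fun m => m ≤ k) = Finset.Icc 1 k := by
      ext m; simp only [Finset.mem_filter, Finset.mem_Icc]; omega
    rw [this, Nat.card_Icc]
    omega
  rw [← Finset.card_image_of_injOn
    (hinjOn.mono (by intro x hx; exact (Finset.mem_filter.mp hx).1))]
  omega

lemma top_prop (P : Finset (ℝ × ℝ)) (n k : ℕ) (hn : P.card = n) (hk : k = n / 2 + 1)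
    (f : ℝ × ℝ → ℝ) (g : ℝ × ℝ → Prop) [DecidablePred g] (p : ℝ × ℝ) (hp : p ∈ P)
    (hpk : (P.filter (fun r => f p ≤ f r)).card ≤ k)
    (x₀ : ℝ) (hc : n < 2 * (P.filter (fun q => x₀ ≤ f q ∧ g q)).card) :
    x₀ ≤ f p := by
  by_contra hlt
  push_neg at hlt
  have hsub : P.filter (fun q => x₀ ≤ f q ∧ g q) ⊂ P.filter (fun r => f p ≤ f r) := by
    constructor
    · intro r hr
      simp only [Finset.mem_filter] at hr ⊢
      exact ⟨hr.1, le_trans hlt.le hr.2.1⟩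
    · intro h
      have := h (Finset.mem_filter.mpr ⟨hp, le_refl _⟩)
      simp only [Finset.mem_filter] at this
      exact absurd this.2.1 (not_le.mpr hlt)
  have := Finset.card_lt_card hsub
  omega

theorem stmt6 (P : Finset (ℝ × ℝ)) (n : ℕ) (hn : P.card = n) (hpos : 0 < n)
    (hgen : ∀ u ∈ P, ∀ v ∈ P, u ≠ v → u.1 ≠ v.1 ∧ u.2 ≠ v.2) :
    ∃ p ∈ P, ∀ x₀ y₀ : ℝ,
      (n : ℝ) / 2 < ((P.filter (fun q => x₀ ≤ q.1 ∧ y₀ ≤ q.2)).card : ℝ) →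
      x₀ ≤ p.1 ∧ y₀ ≤ p.2 := by
  classical
  set k := n / 2 + 1 with hk
  have hkn : k ≤ n := by omega
  have hX := top_card P n k hn hkn (fun q => q.1) (fun u hu v hv huv => (hgen u hu v hv huv).1)
  have hY := top_card P n k hn hkn (fun q => q.2) (fun u hu v hv huv => (hgen u hu v hv huv).2)
  set X := P.filter (fun q => (P.filter (fun r => q.1 ≤ r.1)).card ≤ k) with hXdef
  set Y := P.filter (fun q => (P.filter (fun r => q.2 ≤ r.2)).card ≤ k) with hYdef
  have hunion : (X ∪ Y).card ≤ n := by
    rw [← hn]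
    apply Finset.card_le_card
    intro q hq
    rcases Finset.mem_union.mp hq with h | h
    · exact (Finset.mem_filter.mp h).1
    · exact (Finset.mem_filter.mp h).1
  have hcard : 1 ≤ (X ∩ Y).card := by
    have := Finset.card_inter_add_card_union X Y
    omega
  obtain ⟨p, hpXY⟩ := Finset.card_pos.mp hcard
  have hpX := Finset.mem_filter.mp (Finset.mem_inter.mp hpXY).1
  have hpY := Finset.mem_filter.mp (Finset.mem_inter.mp hpXY).2
  refine ⟨p, hpX.1, fun x₀ y₀ hbig => ?_⟩
  have hc : n < 2 * (P.filter (fun q => x₀ ≤ q.1 ∧ y₀ ≤ q.2)).card := by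
    have : (n : ℝ) < 2 * ((P.filter (fun q => x₀ ≤ q.1 ∧ y₀ ≤ q.2)).card : ℝ) := by linarith
    exact_mod_cast this
  constructor
  · exact top_prop P n k hn hk (fun q => q.1) (fun q => y₀ ≤ q.2) p hpX.1 hpX.2 x₀ hc
  · have hc' : n < 2 * (P.filter (fun q => y₀ ≤ q.2 ∧ x₀ ≤ q.1)).card := by
      have heq : P.filter (fun q => y₀ ≤ q.2 ∧ x₀ ≤ q.1)
          = P.filter (fun q => x₀ ≤ q.1 ∧ y₀ ≤ q.2) := by
        ext q; simp [and_comm]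
      rw [heq]; exact hc
    exact top_prop P n k hn hk (fun q => q.2) (fun q => x₀ ≤ q.1) p hpY.1 hpY.2 y₀ hc'
end

section
/- Let P be a set of n points in the plane in general position. There exists a point p ∈ P such that every skyline rectangle (axis-parallel rectangle unbounded in the negative y-direction) containing more than 2n/3 points of P also contains p. -/
theorem stmt11 (P : Finset (ℝ × ℝ)) (n : ℕ) (hn : P.card = n) (hpos : 0 < n)
    (hgen : ∀ u ∈ P, ∀ v ∈ P, u ≠ v → u.1 ≠ v.1 ∧ u.2 ≠ v.2) :
    ∃ p ∈ P, ∀ x₁ x₂ y : ℝ, x₁ ≤ x₂ →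
      2 * (n : ℝ) / 3 <
        ((P.filter (fun q => x₁ ≤ q.1 ∧ q.1 ≤ x₂ ∧ q.2 ≤ y)).card : ℝ) →
      x₁ ≤ p.1 ∧ p.1 ≤ x₂ ∧ p.2 ≤ y := by
  classical
  have hn' : (0:ℝ) < (n:ℝ) := by exact_mod_cast hpos
  have hn3 : (0:ℝ) < (n:ℝ)/3 := by linarith
  set L : ℝ × ℝ → ℕ := fun q => (P.filter (fun r => r.1 ≤ q.1)).card with hLdef
  set R : ℝ × ℝ → ℕ := fun q => (P.filter (fun r => q.1 ≤ r.1)).card with hRdef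
  set A : Finset (ℝ × ℝ) := P.filter (fun q => ¬ ((n:ℝ)/3 ≤ (L q : ℝ))) with hAdef
  set B : Finset (ℝ × ℝ) := P.filter (fun q => ¬ ((n:ℝ)/3 ≤ (R q : ℝ))) with hBdef
  set M : Finset (ℝ × ℝ) :=
    P.filter (fun q => (n:ℝ)/3 ≤ (L q : ℝ) ∧ (n:ℝ)/3 ≤ (R q : ℝ)) with hMdef
  have hAcard : ((A.card : ℝ)) < (n:ℝ)/3 := by
    rcases A.eq_empty_or_nonempty with h | h
    · simp [h]; exact hpos
    · obtain ⟨q0, hq0A, hq0max⟩ := A.exists_max_image (fun q => q.1) h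
      have hsub : A ⊆ P.filter (fun r => r.1 ≤ q0.1) := by
        intro a ha
        exact Finset.mem_filter.mpr ⟨(Finset.mem_filter.mp ha).1, hq0max a ha⟩
      have hle := Finset.card_le_card hsub
      have hq0 : ¬ ((n:ℝ)/3 ≤ (L q0 : ℝ)) := (Finset.mem_filter.mp hq0A).2
      push_neg at hq0
      have : (A.card : ℝ) ≤ (L q0 : ℝ) := by exact_mod_cast hle
      linarith
  have hBcard : ((B.card : ℝ)) < (n:ℝ)/3 := by
    rcases B.eq_empty_or_nonempty with h | h
    · simp [h]; exact hpos
    · obtain ⟨q0, hq0B, hq0min⟩ := B.exists_min_image (fun q => q.1) h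
      have hsub : B ⊆ P.filter (fun r => q0.1 ≤ r.1) := by
        intro a ha
        exact Finset.mem_filter.mpr ⟨(Finset.mem_filter.mp ha).1, hq0min a ha⟩
      have hle := Finset.card_le_card hsub
      have hq0 : ¬ ((n:ℝ)/3 ≤ (R q0 : ℝ)) := (Finset.mem_filter.mp hq0B).2
      push_neg at hq0
      have : (B.card : ℝ) ≤ (R q0 : ℝ) := by exact_mod_cast hle
      linarith
  have hcover : P ⊆ A ∪ B ∪ M := by
    intro q hq
    by_cases h1 : (n:ℝ)/3 ≤ (L q : ℝ)
    · by_cases h2 : (n:ℝ)/3 ≤ (R q : ℝ)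
      · exact Finset.mem_union_right _ (Finset.mem_filter.mpr ⟨hq, h1, h2⟩)
      · exact Finset.mem_union_left _
          (Finset.mem_union_right _ (Finset.mem_filter.mpr ⟨hq, h2⟩))
    · exact Finset.mem_union_left _
        (Finset.mem_union_left _ (Finset.mem_filter.mpr ⟨hq, h1⟩))
  have hMcard : (n:ℝ)/3 < (M.card : ℝ) := by
    have h1 : P.card ≤ A.card + B.card + M.card := by
      calc P.card ≤ (A ∪ B ∪ M).card := Finset.card_le_card hcover
        _ ≤ (A ∪ B).card + M.card := Finset.card_union_le _ _
        _ ≤ A.card + B.card + M.card := by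
            exact Nat.add_le_add_right (Finset.card_union_le _ _) _
    have h2 : (n:ℝ) ≤ (A.card : ℝ) + B.card + M.card := by
      rw [← hn]; exact_mod_cast h1
    linarith
  have hMne : M.Nonempty := by
    rw [← Finset.card_pos]
    by_contra h
    push_neg at h
    interval_cases h' : M.card <;> simp_all <;> linarith
  obtain ⟨p, hpM, hpmin⟩ := M.exists_min_image (fun q => q.2) hMne
  have hpP : p ∈ P := (Finset.mem_filter.mp hpM).1
  obtain ⟨hpL, hpR⟩ := (Finset.mem_filter.mp hpM).2
  refine ⟨p, hpP, ?_⟩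
  intro x₁ x₂ y hx hS
  set S : Finset (ℝ × ℝ) :=
    P.filter (fun q => x₁ ≤ q.1 ∧ q.1 ≤ x₂ ∧ q.2 ≤ y) with hSdef
  have hx1 : x₁ ≤ p.1 := by
    by_contra h
    push_neg at h
    have hsub : S ⊆ P.filter (fun r => ¬ r.1 ≤ p.1) := by
      intro q hq
      obtain ⟨hqP, hq1, _, _⟩ := Finset.mem_filter.mp hq
      exact Finset.mem_filter.mpr ⟨hqP, by push_neg; linarith⟩
    have hsplit := Finset.card_filter_add_card_filter_not
      (s := P) (p := fun r => r.1 ≤ p.1)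
    have h1 : S.card + L p ≤ n := by
      have := Finset.card_le_card hsub
      have hLp : L p = (P.filter (fun r => r.1 ≤ p.1)).card := rfl
      omega
    have h2 : (S.card : ℝ) + (L p : ℝ) ≤ (n : ℝ) := by exact_mod_cast h1
    linarith
  have hx2 : p.1 ≤ x₂ := by
    by_contra h
    push_neg at h
    have hsub : S ⊆ P.filter (fun r => ¬ p.1 ≤ r.1) := by
      intro q hq
      obtain ⟨hqP, _, hq2, _⟩ := Finset.mem_filter.mp hq
      exact Finset.mem_filter.mpr ⟨hqP, by push_neg; linarith⟩
    have hsplit := Finset.card_filter_add_card_filter_not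
      (s := P) (p := fun r => p.1 ≤ r.1)
    have h1 : S.card + R p ≤ n := by
      have := Finset.card_le_card hsub
      have hRp : R p = (P.filter (fun r => p.1 ≤ r.1)).card := rfl
      omega
    have h2 : (S.card : ℝ) + (R p : ℝ) ≤ (n : ℝ) := by exact_mod_cast h1
    linarith
  refine ⟨hx1, hx2, ?_⟩
  have hunion : (S ∪ M).card ≤ n := by
    rw [← hn]
    exact Finset.card_le_card (Finset.union_subset (Finset.filter_subset _ _)
      (Finset.filter_subset _ _))
  have hinter : 0 < (S ∩ M).card := by
    have h1 := Finset.card_union_add_card_inter S M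
    have h2 : ((S ∪ M).card : ℝ) + ((S ∩ M).card : ℝ)
        = (S.card : ℝ) + (M.card : ℝ) := by exact_mod_cast h1
    have h3 : ((S ∪ M).card : ℝ) ≤ (n : ℝ) := by exact_mod_cast hunion
    have : (0:ℝ) < ((S ∩ M).card : ℝ) := by linarith
    exact_mod_cast this
  obtain ⟨q, hq⟩ := Finset.card_pos.mp hinter
  obtain ⟨hqS, hqM⟩ := Finset.mem_inter.mp hq
  have hqy : q.2 ≤ y := (Finset.mem_filter.mp hqS).2.2.2
  have := hpmin q hqM
  linarith
end

section
/- Let P be a finite centrally symmetric set of n points in R^d (p ∈ P implies −p ∈ P, and 0 ∉ P). Then the origin is contained in at least n²/4 of the diametral balls induced by pairs of points of P. -/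
open scoped Classical RealInnerProductSpace

theorem stmt16 (d : ℕ) (P : Finset (EuclideanSpace ℝ (Fin d))) (n : ℕ)
    (hn : P.card = n) (hsym : ∀ p ∈ P, -p ∈ P) (h0 : (0 : EuclideanSpace ℝ (Fin d)) ∉ P) :
    (n : ℝ) ^ 2 / 4 ≤
      (((P.powersetCard 2).filter
          (fun S => ∃ a ∈ S, ∃ b ∈ S, a ≠ b ∧ ⟪a, b⟫ ≤ 0)).card : ℝ) := by
  classical
  set G := (P.powersetCard 2).filter
      (fun S => ∃ a ∈ S, ∃ b ∈ S, a ≠ b ∧ ⟪a, b⟫ ≤ 0) with hGdef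
  set U := (P ×ˢ P).filter (fun p => p.1 ≠ p.2 ∧ ⟪p.1, p.2⟫ ≤ 0) with hUdef
  have key1 : n ^ 2 ≤ 2 * U.card := by
    have hfib : U.card = ∑ a ∈ P, (U.filter (fun p => p.1 = a)).card := by
      apply Finset.card_eq_sum_card_fiberwise
      intro p hp
      exact (Finset.mem_product.mp (Finset.mem_filter.mp hp).1).1
    have hrow : ∀ a ∈ P, n ≤ 2 * (U.filter (fun p => p.1 = a)).card := by
      intro a ha
      have ha0 : a ≠ 0 := fun h => h0 (h ▸ ha)
      have haa : (0:ℝ) < ⟪a, a⟫ := by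
        rw [real_inner_self_eq_norm_sq]
        exact pow_pos (norm_pos_iff.mpr ha0) 2
      set R := P.filter (fun b => ⟪a, b⟫ ≤ 0) with hR
      set B := P.filter (fun b => ¬ ⟪a, b⟫ ≤ 0) with hB
      have hBR : B.card ≤ R.card := by
        apply Finset.card_le_card_of_injOn (fun b => -b)
        · intro b hb
          obtain ⟨hbP, hbpos⟩ := Finset.mem_filter.mp hb
          refine Finset.mem_filter.mpr ⟨hsym b hbP, ?_⟩
          rw [inner_neg_right]
          linarith [lt_of_not_ge hbpos]
        · intro x _ y _ h
          exact neg_injective h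
      have hsum : R.card + B.card = n := by
        rw [Finset.card_filter_add_card_filter_not, hn]
      have hRfib : R.card = (U.filter (fun p => p.1 = a)).card := by
        apply Finset.card_bij (fun b _ => (a, b))
        · intro b hb
          obtain ⟨hbP, hble⟩ := Finset.mem_filter.mp hb
          refine Finset.mem_filter.mpr ⟨Finset.mem_filter.mpr
            ⟨Finset.mem_product.mpr ⟨ha, hbP⟩, ?_, hble⟩, rfl⟩
          intro h
          simp only at h
          rw [← h] at hble
          linarith
        · intro x _ y _ h
          exact congrArg Prod.snd h
        · intro p hp
          obtain ⟨hpU, hp1⟩ := Finset.mem_filter.mp hp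
          obtain ⟨hpP, hne, hle⟩ := Finset.mem_filter.mp hpU
          refine ⟨p.2, Finset.mem_filter.mpr ⟨(Finset.mem_product.mp hpP).2, ?_⟩, ?_⟩
          · rw [← hp1]; exact hle
          · rw [← hp1]
      omega
    calc n ^ 2 = ∑ _a ∈ P, n := by rw [Finset.sum_const, hn, smul_eq_mul, sq]
    _ ≤ ∑ a ∈ P, 2 * (U.filter (fun p => p.1 = a)).card := Finset.sum_le_sum hrow
    _ = 2 * U.card := by rw [← Finset.mul_sum, ← hfib]
  have key2 : U.card ≤ 2 * G.card := by
    have himg : U.image (fun p => ({p.1, p.2} : Finset (EuclideanSpace ℝ (Fin d)))) ⊆ G := by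
      intro S hS
      obtain ⟨p, hp, rfl⟩ := Finset.mem_image.mp hS
      obtain ⟨hpP, hne, hle⟩ := Finset.mem_filter.mp hp
      obtain ⟨h1, h2⟩ := Finset.mem_product.mp hpP
      refine Finset.mem_filter.mpr ⟨Finset.mem_powersetCard.mpr ⟨?_, ?_⟩, ?_⟩
      · intro x hx
        rcases Finset.mem_insert.mp hx with rfl | hx
        · exact h1
        · rw [Finset.mem_singleton.mp hx]; exact h2
      · rw [Finset.card_insert_of_notMem (by simpa using hne), Finset.card_singleton]
      · exact ⟨p.1, Finset.mem_insert_self _ _, p.2,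
          Finset.mem_insert_of_mem (Finset.mem_singleton_self _), hne, hle⟩
    have hcard : U.card ≤ 2 * (U.image (fun p => ({p.1, p.2} : Finset (EuclideanSpace ℝ (Fin d))))).card := by
      apply Finset.card_le_mul_card_image
      intro S hS
      obtain ⟨p, hp, rfl⟩ := Finset.mem_image.mp hS
      have hsub : U.filter (fun q => ({q.1, q.2} : Finset (EuclideanSpace ℝ (Fin d))) = {p.1, p.2})
          ⊆ {p, (p.2, p.1)} := by
        intro q hq
        obtain ⟨hqU, hqeq⟩ := Finset.mem_filter.mp hq
        obtain ⟨_, hqne, _⟩ := Finset.mem_filter.mp hqU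
        have h1 : q.1 ∈ ({p.1, p.2} : Finset (EuclideanSpace ℝ (Fin d))) := by
          rw [← hqeq]; exact Finset.mem_insert_self _ _
        have h2 : q.2 ∈ ({p.1, p.2} : Finset (EuclideanSpace ℝ (Fin d))) := by
          rw [← hqeq]; exact Finset.mem_insert_of_mem (Finset.mem_singleton_self _)
        simp only [Finset.mem_insert, Finset.mem_singleton] at h1 h2 ⊢
        rcases h1 with h1 | h1 <;> rcases h2 with h2 | h2
        · exact absurd (h1.trans h2.symm) hqne
        · left; exact Prod.ext h1 h2
        · right; exact Prod.ext h1 h2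
        · exact absurd (h1.trans h2.symm) hqne
      calc _ ≤ ({p, (p.2, p.1)} : Finset _).card := Finset.card_le_card hsub
      _ ≤ 2 := Finset.card_insert_le _ _ |>.trans (by simp)
    exact hcard.trans (by exact Nat.mul_le_mul_left 2 (Finset.card_le_card himg))
  have : (n : ℝ) ^ 2 ≤ 4 * G.card := by
    have : n ^ 2 ≤ 4 * G.card := by omega
    exact_mod_cast this
  linarith
end

section
/- Let x_1 < x_2 < ... < x_n be n points on the real line and let C be a multiset of m closed intervals, each of the form [x_i, x_j] with i < j. Then the sum over intervals c ∈ C of the number of points x_k contained in c is at least m²/(2n) + 3m/2. Consequently, some point x_k is contained in at least m²/(2n²) + 3m/(2n) intervals of C. -/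
open scoped Classical

lemma aux_sum_range_le : ∀ (k : ℕ) (T : Finset ℕ), T.card = k →
    ∑ i ∈ Finset.range k, i ≤ ∑ t ∈ T, t := by
  intro k
  induction k with
  | zero => simp
  | succ k ih =>
    intro T hT
    have hne : T.Nonempty := by rw [← Finset.card_pos, hT]; omega
    set M := T.max' hne with hMdef
    have hM : M ∈ T := T.max'_mem hne
    have hsub : T ⊆ Finset.range (M + 1) := fun t ht =>
      Finset.mem_range.mpr (by have := Finset.le_max' T t ht; omega)
    have hcard : k + 1 ≤ M + 1 := by
      have := Finset.card_le_card hsub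
      rw [hT] at this; simpa using this
    have h1 : ∑ i ∈ Finset.range (k + 1), i = k + ∑ i ∈ Finset.range k, i := by
      rw [Finset.sum_range_succ]; ring
    have h2 : M + ∑ t ∈ T.erase M, t = ∑ t ∈ T, t :=
      Finset.add_sum_erase T id hM
    have h3 := ih (T.erase M) (by rw [Finset.card_erase_of_mem hM, hT]; rfl)
    omega

-- key combinatorial lemma: for a finset of naturals all ≥ 1,
-- 2 * ∑ (t+1) ≥ card^2 + 3 * card
lemma aux_pos_sum (T : Finset ℕ) (hT : ∀ t ∈ T, 1 ≤ t) :
    T.card ^ 2 + 3 * T.card ≤ 2 * ∑ t ∈ T, (t + 1) := by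
  set T' := T.image (· - 1) with hT'
  have hinj : Set.InjOn (· - 1) T := by
    intro a ha b hb hab
    have := hT a ha; have := hT b hb
    simp only at hab; omega
  have hcard : T'.card = T.card := Finset.card_image_of_injOn hinj
  have hsum : ∑ t' ∈ T', (t' + 2) = ∑ t ∈ T, (t + 1) := by
    rw [hT', Finset.sum_image (fun a ha b hb => hinj ha hb)]
    apply Finset.sum_congr rfl
    intro t ht
    have := hT t ht; omega
  have h1 : ∑ i ∈ Finset.range T'.card, i ≤ ∑ t' ∈ T', t' :=
    aux_sum_range_le T'.card T' rfl
  have h2 : (∑ i ∈ Finset.range T'.card, i) * 2 = T'.card * (T'.card - 1) :=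
    Finset.sum_range_id_mul_two T'.card
  have h3 : ∑ t' ∈ T', (t' + 2) = (∑ t' ∈ T', t') + 2 * T'.card := by
    rw [Finset.sum_add_distrib]; simp [mul_comm]
  rcases Nat.eq_zero_or_pos T.card with h | h
  · simp [h, Finset.card_eq_zero.mp h]
  · obtain ⟨d, hd⟩ : ∃ d, T'.card = d + 1 := ⟨T'.card - 1, by omega⟩
    rw [hd] at h1 h2 h3
    simp only [Nat.add_sub_cancel] at h2
    have hTc : T.card = d + 1 := by omega
    rw [hTc, ← hsum, h3]
    nlinarith [h1, h2]

theorem stmt18 (n : ℕ) (hn : 0 < n) (x : Fin n → ℝ) (hx : StrictMono x)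
    (C : Finset (Fin n × Fin n)) (hC : ∀ c ∈ C, c.1 < c.2) (m : ℕ) (hm : C.card = m) :
    (m : ℝ) ^ 2 / (2 * n) + 3 * m / 2 ≤
      ∑ c ∈ C, ((Finset.univ.filter (fun k => x c.1 ≤ x k ∧ x k ≤ x c.2)).card : ℝ) ∧
    ∃ k : Fin n,
      (m : ℝ) ^ 2 / (2 * n ^ 2) + 3 * m / (2 * n) ≤
        ((C.filter (fun c => x c.1 ≤ x k ∧ x k ≤ x c.2)).card : ℝ) := by
  -- step 1: the number of points in interval c is c.2 - c.1 + 1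
  have hcount : ∀ c ∈ C,
      (Finset.univ.filter (fun k => x c.1 ≤ x k ∧ x k ≤ x c.2)).card
        = c.2.val - c.1.val + 1 := by
    intro c hc
    have : (Finset.univ.filter (fun k => x c.1 ≤ x k ∧ x k ≤ x c.2))
        = Finset.Icc c.1 c.2 := by
      ext k
      simp [Finset.mem_Icc, hx.le_iff_le]
    rw [this, Fin.card_Icc]
    have := hC c hc
    omega
  -- fiberwise bound
  have hfiber : ∀ i : Fin n,
      ((C.filter (fun c => c.1 = i)).card) ^ 2 + 3 * (C.filter (fun c => c.1 = i)).card
        ≤ 2 * ∑ c ∈ C.filter (fun c => c.1 = i), (c.2.val - c.1.val + 1) := by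
    intro i
    set S := C.filter (fun c => c.1 = i) with hS
    have hmem : ∀ c ∈ S, c ∈ C ∧ c.1 = i := by
      intro c hc; simpa [hS] using hc
    set T := S.image (fun c => c.2.val - c.1.val) with hT
    have hinj : Set.InjOn (fun c : Fin n × Fin n => c.2.val - c.1.val) S := by
      intro a ha b hb hab
      obtain ⟨haC, ha1⟩ := hmem a ha
      obtain ⟨hbC, hb1⟩ := hmem b hb
      have h1 : (a.1 : ℕ) < a.2 := hC a haC
      have h2 : (b.1 : ℕ) < b.2 := hC b hbC
      have e1 : (a.1 : ℕ) = (b.1 : ℕ) := by rw [ha1, hb1]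
      have hab' : (a.2 : ℕ) - (a.1 : ℕ) = (b.2 : ℕ) - (b.1 : ℕ) := hab
      have hv : (a.2 : ℕ) = (b.2 : ℕ) := by omega
      exact Prod.ext (ha1.trans hb1.symm) (Fin.ext hv)
    have hcardT : T.card = S.card := Finset.card_image_of_injOn hinj
    have hsumT : ∑ t ∈ T, (t + 1) = ∑ c ∈ S, (c.2.val - c.1.val + 1) := by
      rw [hT, Finset.sum_image (fun a ha b hb => hinj ha hb)]
    have hpos : ∀ t ∈ T, 1 ≤ t := by
      intro t ht
      rw [hT, Finset.mem_image] at ht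
      obtain ⟨c, hc, rfl⟩ := ht
      have := hC c (hmem c hc).1
      omega
    have := aux_pos_sum T hpos
    rw [hcardT, hsumT] at this
    exact this
  -- sum over fibers
  have hsumfib : ∑ i : Fin n, ∑ c ∈ C.filter (fun c => c.1 = i), (c.2.val - c.1.val + 1)
      = ∑ c ∈ C, (c.2.val - c.1.val + 1) :=
    Finset.sum_fiberwise_of_maps_to (fun c _ => Finset.mem_univ c.1) _
  have hcardfib : ∑ i : Fin n, (C.filter (fun c => c.1 = i)).card = m := by
    rw [← hm]
    exact (Finset.card_eq_sum_card_fiberwise (fun c _ => Finset.mem_univ c.1)).symm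
  -- Cauchy-Schwarz over ℝ
  have hCS : (m : ℝ) ^ 2 ≤ (n : ℝ) * ∑ i : Fin n, ((C.filter (fun c => c.1 = i)).card : ℝ) ^ 2 := by
    have := sq_sum_le_card_mul_sum_sq (s := (Finset.univ : Finset (Fin n)))
      (f := fun i => ((C.filter (fun c => c.1 = i)).card : ℝ))
    simp only [Finset.card_univ, Fintype.card_fin] at this
    calc (m : ℝ) ^ 2 = (∑ i : Fin n, ((C.filter (fun c => c.1 = i)).card : ℝ)) ^ 2 := by
          rw [← Nat.cast_sum, hcardfib]
      _ ≤ _ := this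
  -- combine to get the key real inequality
  have hkey : (m : ℝ) ^ 2 + 3 * m * n ≤ 2 * n * ∑ c ∈ C, ((c.2.val - c.1.val + 1 : ℕ) : ℝ) := by
    have h1 : ∀ i : Fin n, (((C.filter (fun c => c.1 = i)).card : ℝ)) ^ 2
        + 3 * ((C.filter (fun c => c.1 = i)).card : ℝ)
        ≤ 2 * ∑ c ∈ C.filter (fun c => c.1 = i), ((c.2.val - c.1.val + 1 : ℕ) : ℝ) := by
      intro i
      have := hfiber i
      have := (Nat.cast_le (α := ℝ)).mpr this
      push_cast at this ⊢
      linarith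
    have h2 : ∑ i : Fin n, (((C.filter (fun c => c.1 = i)).card : ℝ) ^ 2
        + 3 * ((C.filter (fun c => c.1 = i)).card : ℝ))
        ≤ ∑ i : Fin n, 2 * ∑ c ∈ C.filter (fun c => c.1 = i), ((c.2.val - c.1.val + 1 : ℕ) : ℝ) :=
      Finset.sum_le_sum (fun i _ => h1 i)
    have h3 : ∑ i : Fin n, 2 * ∑ c ∈ C.filter (fun c => c.1 = i), ((c.2.val - c.1.val + 1 : ℕ) : ℝ)
        = 2 * ∑ c ∈ C, ((c.2.val - c.1.val + 1 : ℕ) : ℝ) := by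
      rw [← Finset.mul_sum]
      congr 1
      exact_mod_cast congrArg (fun z : ℕ => (z : ℝ)) hsumfib
    have h4 : ∑ i : Fin n, (((C.filter (fun c => c.1 = i)).card : ℝ) ^ 2
        + 3 * ((C.filter (fun c => c.1 = i)).card : ℝ))
        = (∑ i : Fin n, ((C.filter (fun c => c.1 = i)).card : ℝ) ^ 2) + 3 * m := by
      rw [Finset.sum_add_distrib, ← Finset.mul_sum, ← Nat.cast_sum, hcardfib]
    have hn' : (0 : ℝ) < n := by exact_mod_cast hn
    nlinarith [h2, h3, h4, hCS]
  -- first conjunct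
  have hsumeq : ∑ c ∈ C, ((Finset.univ.filter (fun k => x c.1 ≤ x k ∧ x k ≤ x c.2)).card : ℝ)
      = ∑ c ∈ C, ((c.2.val - c.1.val + 1 : ℕ) : ℝ) := by
    apply Finset.sum_congr rfl
    intro c hc
    rw [hcount c hc]
  have hn' : (0 : ℝ) < n := by exact_mod_cast hn
  have first : (m : ℝ) ^ 2 / (2 * n) + 3 * m / 2 ≤
      ∑ c ∈ C, ((Finset.univ.filter (fun k => x c.1 ≤ x k ∧ x k ≤ x c.2)).card : ℝ) := by
    rw [hsumeq]
    rw [div_add_div _ _ (by positivity) (by norm_num : (2:ℝ) ≠ 0), div_le_iff₀ (by positivity)]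
    ring_nf
    ring_nf at hkey
    nlinarith [hkey]
  refine ⟨first, ?_⟩
  -- second conjunct: double counting + pigeonhole
  have hswap : ∑ k : Fin n, ((C.filter (fun c => x c.1 ≤ x k ∧ x k ≤ x c.2)).card : ℝ)
      = ∑ c ∈ C, ((Finset.univ.filter (fun k => x c.1 ≤ x k ∧ x k ≤ x c.2)).card : ℝ) := by
    simp only [Finset.card_filter]
    push_cast
    exact Finset.sum_comm
  have havg : ∑ k : Fin n, ((m : ℝ) ^ 2 / (2 * n ^ 2) + 3 * m / (2 * n))
      ≤ ∑ k : Fin n, ((C.filter (fun c => x c.1 ≤ x k ∧ x k ≤ x c.2)).card : ℝ) := by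
    rw [hswap, Finset.sum_const, Finset.card_univ, Fintype.card_fin, nsmul_eq_mul]
    calc (n : ℝ) * ((m : ℝ) ^ 2 / (2 * n ^ 2) + 3 * m / (2 * n))
        = (m : ℝ) ^ 2 / (2 * n) + 3 * m / 2 := by field_simp
      _ ≤ _ := first
  obtain ⟨k, _, hk⟩ := Finset.exists_le_of_sum_le ⟨⟨0, hn⟩, Finset.mem_univ _⟩ havg
  exact ⟨k, hk⟩
end
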